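/- Let r ≥ 1 and p_1 < ⋯ < p_r be integers with p_1 ≥ 2; set P_j = 2^{p_j}, T_j = P_1 + ⋯ + P_j (with T_0 = 0), n = T_r + 1, and S = x_1 + ⋯ + x_{n−2} in R_n. Then for all i, j with 1 ≤ i < j ≤ r, setting D = T_j − P_i, for every function f from {1,…,D − P_j + 1} to {1,…,D − 1}, the element (∏_{k=1}^{D−P_j+1} x_{f(k)}) · (x_{D+1} x_{D+2} ⋯ x_n) · S^{P_j − 1} equals 0 in R_n. -/

import Mathlib

open MvPolynomial Finset
open Fin.NatCast

noncomputable section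

/-- The defining ideal of `R_n` (for `n ≥ 3`): generated by `x_1^2`, by
`x_i^2 - x_{i-1} x_i` for `2 ≤ i ≤ n-1`, and by `x_n^2 - (x_1 + ⋯ + x_{n-2}) x_n`
(variables are 1-based; `X ((i-1 : ℕ) : Fin n)` is `x_i`). -/
def Rrel (n : ℕ) [NeZero n] : Ideal (MvPolynomial (Fin n) (ZMod 2)) :=
  Ideal.span ((fun i : ℕ =>
      X ((i - 1 : ℕ) : Fin n) ^ 2 -
        (if i = 1 then 0
         else if i = n then
           (∑ j ∈ Finset.Icc 1 (n - 2), X ((j - 1 : ℕ) : Fin n)) * X ((n - 1 : ℕ) : Fin n)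
         else X ((i - 2 : ℕ) : Fin n) * X ((i - 1 : ℕ) : Fin n))) ''
    Set.Icc 1 n)

/-- The ring `R_n`. -/
abbrev Rring (n : ℕ) [NeZero n] : Type :=
  MvPolynomial (Fin n) (ZMod 2) ⧸ Rrel n

/-- The image of `x_i` (1-based, for `1 ≤ i ≤ n`) in `R_n`. -/
def xR (n : ℕ) [NeZero n] (i : ℕ) : Rring n :=
  Ideal.Quotient.mk (Rrel n) (X ((i - 1 : ℕ) : Fin n))

namespace Statement4Aux

/-- The generators of `Rrel n`. -/
def gen (n : ℕ) [NeZero n] : ℕ → MvPolynomial (Fin n) (ZMod 2) := fun i =>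
  X ((i - 1 : ℕ) : Fin n) ^ 2 -
    (if i = 1 then 0
     else if i = n then
       (∑ j ∈ Finset.Icc 1 (n - 2), X ((j - 1 : ℕ) : Fin n)) * X ((n - 1 : ℕ) : Fin n)
     else X ((i - 2 : ℕ) : Fin n) * X ((i - 1 : ℕ) : Fin n))

lemma gen_mem (n : ℕ) [NeZero n] {i : ℕ} (h1 : 1 ≤ i) (h2 : i ≤ n) : gen n i ∈ Rrel n :=
  Ideal.subset_span (Set.mem_image_of_mem _ ⟨h1, h2⟩)

variable (n : ℕ) [NeZero n]

lemma two_eq_zero : (2 : Rring n) = 0 := by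
  have h1 : ((2:ℕ) : MvPolynomial (Fin n) (ZMod 2)) = 0 := by
    exact_mod_cast CharP.cast_eq_zero (MvPolynomial (Fin n) (ZMod 2)) 2
  have h2 : ((2:ℕ) : Rring n) = Ideal.Quotient.mk (Rrel n) ((2:ℕ) : MvPolynomial (Fin n) (ZMod 2)) :=
    (map_natCast _ 2).symm
  rw [show (2 : Rring n) = ((2:ℕ) : Rring n) by norm_cast, h2, h1, map_zero]

lemma even_nsmul_zero {k : ℕ} (hk : Even k) (v : Rring n) : k • v = 0 := by
  obtain ⟨t, rfl⟩ := hk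
  have h : ((t + t : ℕ) : Rring n) = 2 * (t : Rring n) := by push_cast; ring
  rw [nsmul_eq_mul, h, two_eq_zero n, zero_mul, zero_mul]

lemma xR_one_sq : xR n 1 * xR n 1 = 0 := by
  have hmem := gen_mem n le_rfl (Nat.one_le_iff_ne_zero.mpr (NeZero.ne n))
  unfold gen at hmem
  rw [if_pos rfl, sub_zero] at hmem
  unfold xR
  rw [← map_mul, ← sq]
  exact Ideal.Quotient.eq_zero_iff_mem.mpr hmem

lemma xR_sq {i : ℕ} (h2 : 2 ≤ i) (hin : i + 1 ≤ n) :
    xR n i * xR n i = xR n (i-1) * xR n i := by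
  have hmem := gen_mem n (i := i) (by omega) (by omega)
  unfold gen at hmem
  rw [if_neg (by omega : ¬ i = 1), if_neg (by omega : ¬ i = n)] at hmem
  unfold xR
  rw [← map_mul, ← map_mul, show (i - 1 - 1 : ℕ) = i - 2 by omega]
  refine Ideal.Quotient.eq.mpr ?_
  have hsq : (X ((i-1:ℕ) : Fin n) : MvPolynomial (Fin n) (ZMod 2)) * X ((i-1:ℕ) : Fin n)
      = X ((i-1:ℕ) : Fin n) ^ 2 := (sq _).symm
  rw [hsq]
  exact hmem

/-- Key vanishing lemma: a product of more than `c` variables, all with (1-based)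
indices in `[1, c]` with `c ≤ n - 1`, is zero in `R_n`. -/
lemma key1 :
    ∀ N c (M : Multiset ℕ), c + M.sum ≤ N → c + 1 ≤ n →
      (∀ a ∈ M, 1 ≤ a ∧ a ≤ c) → c < Multiset.card M →
      (M.map (xR n)).prod = 0 := by
  intro N
  induction N using Nat.strong_induction_on with
  | _ N ih =>
    intro c M hN hc hmem hcard
    rcases Nat.eq_zero_or_pos c with hc0 | hc1
    · -- c = 0 : contradiction
      subst hc0
      have hpos : 0 < Multiset.card M := by omega
      obtain ⟨a, ha⟩ := Multiset.card_pos_iff_exists_mem.mp hpos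
      have := hmem a ha
      omega
    by_cases h2 : 2 ≤ M.count c
    · obtain ⟨u, hu⟩ := Multiset.le_iff_exists_add.mp (Multiset.le_count_iff_replicate_le.mp h2)
      have hprod : (M.map (xR n)).prod = (xR n c * xR n c) * (u.map (xR n)).prod := by
        rw [hu, Multiset.map_add, Multiset.prod_add, Multiset.map_replicate,
          Multiset.prod_replicate, sq]
      rcases Nat.eq_or_lt_of_le hc1 with hc1' | hc2
      · -- c = 1
        rw [hprod, ← hc1', xR_one_sq, zero_mul]
      -- c ≥ 2
      rw [hprod, xR_sq n (by omega) (by omega), mul_assoc, ← Multiset.prod_cons,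
        ← Multiset.map_cons, ← Multiset.prod_cons, ← Multiset.map_cons]
      have hsum : M.sum = c + c + u.sum := by rw [hu]; simp [Multiset.sum_replicate]; ring
      have hcard2 : Multiset.card M = 2 + Multiset.card u := by rw [hu]; simp; omega
      refine ih (N-1) (by omega) c ((c-1) ::ₘ c ::ₘ u) ?_ hc ?_ ?_
      · simp only [Multiset.sum_cons]; omega
      · intro a ha
        rcases Multiset.mem_cons.mp ha with rfl | ha
        · omega
        rcases Multiset.mem_cons.mp ha with rfl | ha
        · omega
        · have := hmem a (by rw [hu]; exact Multiset.mem_add.mpr (Or.inr ha)); omega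
      · simp only [Multiset.card_cons]; omega
    · -- count c ≤ 1
      by_cases hmemc : c ∈ M
      · have hM : M = c ::ₘ M.erase c := (Multiset.cons_erase hmemc).symm
        have hnotin : c ∉ M.erase c := by
          have := Multiset.count_erase_self c M
          have h1 := Multiset.count_pos.mpr hmemc
          intro hco
          have := Multiset.count_pos.mpr hco
          omega
        have h0 : ((M.erase c).map (xR n)).prod = 0 := by
          refine ih (N-1) (by omega) (c-1) (M.erase c) ?_ (by omega) ?_ ?_
          · have : M.sum = c + (M.erase c).sum := by rw [hM]; simp
            omega
          · intro a ha
            have h1 := hmem a (Multiset.mem_of_mem_erase ha)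
            have : a ≠ c := fun h => hnotin (h ▸ ha)
            omega
          · have : Multiset.card M = 1 + Multiset.card (M.erase c) := by rw [hM]; simp; omega
            omega
        rw [hM, Multiset.map_cons, Multiset.prod_cons, h0, mul_zero]
      · have hsub : ∀ a ∈ M, 1 ≤ a ∧ a ≤ c - 1 := by
          intro a ha
          have := hmem a ha
          have : a ≠ c := fun h => hmemc (h ▸ ha)
          omega
        exact ih (N-1) (by omega) (c-1) M (by omega) (by omega)
          (by intro a ha; exact hsub a ha) (by omega)

lemma push : ∀ a, 1 ≤ a → a + 1 ≤ n → ∀ c, c ≤ a →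
    (∏ b ∈ Ioc c a, xR n b) * xR n a =
      if c = 0 then 0 else ∏ b ∈ Ioc (c-1) a, xR n b := by
  intro a
  induction a using Nat.strong_induction_on with
  | _ a ih =>
    intro ha1 ha2 c hca
    rcases Nat.eq_or_lt_of_le hca with rfl | hlt
    · -- c = a
      rw [Finset.Ioc_self, Finset.prod_empty, one_mul, if_neg (by omega)]
      obtain ⟨b, rfl⟩ : ∃ b, c = b + 1 := ⟨c - 1, by omega⟩
      rw [show b + 1 - 1 = b by omega, Nat.Ioc_succ_singleton, Finset.prod_singleton]
    · obtain ⟨e, rfl⟩ : ∃ e, a = e + 1 := ⟨a - 1, by omega⟩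
      rcases Nat.eq_zero_or_pos e with rfl | he1
      · -- a = 1, c = 0
        have hc0 : c = 0 := by omega
        subst hc0
        rw [if_pos rfl, show Finset.Ioc 0 (0+1) = {1} by decide, Finset.prod_singleton]
        exact xR_one_sq n
      · rw [Finset.prod_Ioc_succ_top (by omega : c ≤ e), mul_assoc,
          xR_sq n (by omega) (by omega), show e + 1 - 1 = e by omega,
          show (∏ b ∈ Ioc c e, xR n b) * (xR n e * xR n (e+1))
            = ((∏ b ∈ Ioc c e, xR n b) * xR n e) * xR n (e+1) by ring,
          ih e (by omega) (by omega) (by omega) c (by omega)]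
        by_cases hc0 : c = 0
        · rw [if_pos hc0, if_pos hc0, zero_mul]
        · rw [if_neg hc0, if_neg hc0, ← Finset.prod_Ioc_succ_top (by omega : c - 1 ≤ e)]

lemma pushe (c a e : ℕ) (hc : 1 ≤ c) (hca : c ≤ a) (hae : a ≤ e) (ha2 : a + 1 ≤ n) :
    (∏ b ∈ Ioc c e, xR n b) * xR n a = ∏ b ∈ Ioc (c-1) e, xR n b := by
  rw [← Finset.prod_Ioc_consecutive _ hca hae,
    show ((∏ b ∈ Ioc c a, xR n b) * (∏ b ∈ Ioc a e, xR n b)) * xR n a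
      = ((∏ b ∈ Ioc c a, xR n b) * xR n a) * (∏ b ∈ Ioc a e, xR n b) by ring,
    push n a (by omega) ha2 c hca, if_neg (by omega),
    Finset.prod_Ioc_consecutive _ (by omega : c - 1 ≤ a) hae]

lemma swap (D : ℕ) (hD1 : 1 ≤ D) (hD2 : D + 2 ≤ n) (hpar : Even (n - 1 - D)) :
    (∏ l ∈ Ioc D n, xR n l) * (∑ a ∈ Icc 1 (n-2), xR n a)
      = (∑ a ∈ Icc 1 (D-1), xR n a) * (∏ l ∈ Ioc D n, xR n l) := by
  have hsplit : (∑ a ∈ Icc 1 (n-2), xR n a)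
      = (∑ a ∈ Ico 1 D, xR n a) + ∑ a ∈ Ico D (n-1), xR n a := by
    rw [Finset.sum_Ico_consecutive _ (by omega) (by omega),
      show n - 1 = (n - 2) + 1 by omega, Finset.Ico_add_one_right_eq_Icc]
  have h2 : (∏ l ∈ Ioc D n, xR n l) * ∑ a ∈ Ico D (n-1), xR n a = 0 := by
    rw [Finset.mul_sum]
    have : ∀ a ∈ Ico D (n-1), (∏ l ∈ Ioc D n, xR n l) * xR n a
        = ∏ l ∈ Ioc (D-1) n, xR n l := by
      intro a haa
      simp only [Finset.mem_Ico] at haa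
      exact pushe n D a n hD1 (by omega) (by omega) (by omega)
    rw [Finset.sum_congr rfl this, Finset.sum_const, Nat.card_Ico]
    exact even_nsmul_zero n hpar _
  rw [hsplit, mul_add, h2, add_zero, Finset.mul_sum, Finset.sum_mul,
    show Finset.Ico 1 D = Finset.Icc 1 (D-1) by ext x; simp; omega]
  exact Finset.sum_congr rfl (fun a _ => mul_comm _ _)

lemma swap_pow (D : ℕ) (hD1 : 1 ≤ D) (hD2 : D + 2 ≤ n) (hpar : Even (n - 1 - D)) :
    ∀ q, (∏ l ∈ Ioc D n, xR n l) * (∑ a ∈ Icc 1 (n-2), xR n a) ^ q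
      = (∑ a ∈ Icc 1 (D-1), xR n a) ^ q * (∏ l ∈ Ioc D n, xR n l) := by
  intro q
  induction q with
  | zero => simp
  | succ q ihq =>
    rw [pow_succ, ← mul_assoc, ihq, mul_assoc, swap n D hD1 hD2 hpar, ← mul_assoc, ← pow_succ]

lemma LZ : ∀ q (D : ℕ), 1 ≤ D → D ≤ n → ∀ (M : Multiset ℕ),
    (∀ a ∈ M, 1 ≤ a ∧ a ≤ D - 1) → Multiset.card M + q = D →
    (M.map (xR n)).prod * (∑ a ∈ Finset.Icc 1 (D-1), xR n a) ^ q = 0 := by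
  intro q
  induction q with
  | zero =>
    intro D hD1 hDn M hmem hcard
    rw [pow_zero, mul_one]
    exact key1 n (D-1+M.sum) (D-1) M le_rfl (by omega) hmem (by omega)
  | succ q ihq =>
    intro D hD1 hDn M hmem hcard
    rw [pow_succ', ← mul_assoc, Finset.mul_sum, Finset.sum_mul]
    refine Finset.sum_eq_zero (fun a ha => ?_)
    simp only [Finset.mem_Icc] at ha
    rw [show (M.map (xR n)).prod * xR n a = ((a ::ₘ M).map (xR n)).prod by
      rw [Multiset.map_cons, Multiset.prod_cons, mul_comm]]
    refine ihq D hD1 hDn (a ::ₘ M) ?_ (by simp; omega)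
    intro b hb
    rcases Multiset.mem_cons.mp hb with rfl | hb
    · exact ⟨ha.1, ha.2⟩
    · exact hmem b hb

end Statement4Aux

open Statement4Aux in
/-- Theorem 2.8(a): with `P_j = 2^{p_j}`, `T_j = P_1 + ⋯ + P_j`, `n = T_r + 1`,
`S = x_1 + ⋯ + x_{n-2}`, and `D = T_j - P_i` for `1 ≤ i < j ≤ r`:
`L_{D-1} ⋅ (x_{D+1} ⋯ x_n) ⋅ S^{P_j - 1} = 0` in `R_n`, where `L_{D-1}` is any product of
`D - P_j + 1` of the classes `x_1, …, x_{D-1}` (with repetitions allowed). -/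
theorem statement4 (r : ℕ) (hr : 1 ≤ r) (p : ℕ → ℕ) (hp1 : 2 ≤ p 1)
    (hmono : ∀ i j, 1 ≤ i → i < j → j ≤ r → p i < p j)
    (n : ℕ) [NeZero n] (hn : n = (∑ k ∈ Finset.Icc 1 r, 2 ^ p k) + 1)
    (i j : ℕ) (hi : 1 ≤ i) (hij : i < j) (hj : j ≤ r)
    (D : ℕ) (hD : D = (∑ k ∈ Finset.Icc 1 j, 2 ^ p k) - 2 ^ p i)
    (f : ℕ → ℕ)
    (hf : ∀ k ∈ Finset.Icc 1 (D - 2 ^ p j + 1), f k ∈ Finset.Icc 1 (D - 1)) :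
    (∏ k ∈ Finset.Icc 1 (D - 2 ^ p j + 1), xR n (f k)) *
      (∏ l ∈ Finset.Icc (D + 1) n, xR n l) *
      (∑ a ∈ Finset.Icc 1 (n - 2), xR n a) ^ (2 ^ p j - 1) = 0 := by
  -- numerics
  have hp2 : ∀ k, 1 ≤ k → k ≤ r → 2 ≤ p k := by
    intro k hk1 hkr
    rcases Nat.eq_or_lt_of_le hk1 with h | h
    · exact h ▸ hp1
    · exact le_of_lt (lt_of_le_of_lt hp1 (hmono 1 k le_rfl h hkr))
  have hj2 : 2 ≤ j := by omega
  -- divisibility facts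
  have hdvdTr : 2 ∣ ∑ k ∈ Finset.Icc 1 r, 2 ^ p k := by
    refine Finset.dvd_sum (fun k hk => ?_)
    simp only [Finset.mem_Icc] at hk
    exact dvd_pow_self 2 (by have := hp2 k hk.1 hk.2; omega)
  have hdvdTj : 2 ∣ ∑ k ∈ Finset.Icc 1 j, 2 ^ p k := by
    refine Finset.dvd_sum (fun k hk => ?_)
    simp only [Finset.mem_Icc] at hk
    exact dvd_pow_self 2 (by have := hp2 k hk.1 (le_trans hk.2 hj); omega)
  have hdvdPi : 2 ∣ 2 ^ p i := dvd_pow_self 2 (by have := hp2 i hi (by omega); omega)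
  -- size facts
  have hPi4 : 4 ≤ 2 ^ p i := by
    calc (4:ℕ) = 2^2 := rfl
    _ ≤ 2 ^ p i := Nat.pow_le_pow_right (by norm_num) (hp2 i hi (by omega))
  have hPj4 : 4 ≤ 2 ^ p j := by
    calc (4:ℕ) = 2^2 := rfl
    _ ≤ 2 ^ p j := Nat.pow_le_pow_right (by norm_num) (hp2 j (by omega) hj)
  have hTj_split : (∑ k ∈ Finset.Icc 1 j, 2 ^ p k)
      = (∑ k ∈ Finset.Icc 1 (j-1), 2 ^ p k) + 2 ^ p j := by
    rw [show j = (j-1)+1 by omega] at *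
    exact Finset.sum_Icc_succ_top (by omega) _
  have hPi_le : 2 ^ p i ≤ ∑ k ∈ Finset.Icc 1 (j-1), 2 ^ p k :=
    Finset.single_le_sum (f := fun k => 2 ^ p k) (fun k _ => Nat.zero_le _)
      (Finset.mem_Icc.mpr ⟨hi, by omega⟩)
  have hTj_le : (∑ k ∈ Finset.Icc 1 j, 2 ^ p k) ≤ ∑ k ∈ Finset.Icc 1 r, 2 ^ p k :=
    Finset.sum_le_sum_of_subset (Finset.Icc_subset_Icc le_rfl hj)
  -- basic bounds
  have hPjD : 2 ^ p j ≤ D := by omega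
  have hD1 : 1 ≤ D := by omega
  have hD2 : D + 2 ≤ n := by omega
  have hpar : Even (n - 1 - D) := by
    obtain ⟨a, ha⟩ := hdvdTr
    obtain ⟨b, hb⟩ := hdvdTj
    obtain ⟨c, hc⟩ := hdvdPi
    exact ⟨a - b + c, by omega⟩
  -- the product over `Icc (D+1) n` as a product over `Ioc D n`
  rw [show Finset.Icc (D+1) n = Finset.Ioc D n from Finset.Icc_add_one_left_eq_Ioc D n, mul_assoc,
    swap_pow n D hD1 hD2 hpar (2 ^ p j - 1), ← mul_assoc]
  have hL : (∏ k ∈ Finset.Icc 1 (D - 2 ^ p j + 1), xR n (f k))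
      = ((((Finset.Icc 1 (D - 2 ^ p j + 1)).val.map f)).map (xR n)).prod := by
    rw [Multiset.map_map]
    rfl
  have hLzero : (∏ k ∈ Finset.Icc 1 (D - 2 ^ p j + 1), xR n (f k)) *
      (∑ a ∈ Finset.Icc 1 (D-1), xR n a) ^ (2 ^ p j - 1) = 0 := by
    rw [hL]
    refine LZ n (2 ^ p j - 1) D hD1 (by omega) _ ?_ ?_
    · intro a ha
      obtain ⟨k, hk, rfl⟩ := Multiset.mem_map.mp ha
      have := hf k (Finset.mem_Icc.mpr (Finset.mem_Icc.mp hk))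
      simp only [Finset.mem_Icc] at this
      omega
    · rw [Multiset.card_map, show Multiset.card (Finset.Icc 1 (D - 2 ^ p j + 1)).val
        = (Finset.Icc 1 (D - 2 ^ p j + 1)).card from rfl, Nat.card_Icc]
      omega
  rw [hLzero, zero_mul]
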